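/- Let N ≥ 2 be an integer and M−, m−, m+ positive reals with m− ≤ m+ and (N−1)·M− < (N−2)·m− + m+. Then there exists ε ∈ (0,1) such that for every integer z with 1 ≤ z ≤ N−1, the quantity (M− − m−)·z + (N−1)·m− + m+ is positive and M−·z / ((M− − m−)·z + (N−1)·m− + m+) ≤ (1−ε)·z/N. -/

import Mathlib

/-- Transition `2 → 1` in Lemma 3.2: if `(N−1)M₋ < (N−2)m₋ + m₊` with `m₋ ≤ m₊`, then
for some `ε ∈ (0,1)` the upper bound `g₂(z)` for the rate `p_{2→1}` is dominated by the
modified voter model rate `h₂(z) = (1−ε)z/N` for all `1 ≤ z ≤ N−1`. -/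
theorem deathbirth_g2_dominated_by_h2 (N : ℕ) (hN : 2 ≤ N)
    (Mm mm mp : ℝ) (hMm : 0 < Mm) (hmm : 0 < mm) (hmp : 0 < mp)
    (hle : mm ≤ mp)
    (hcond : ((N : ℝ) - 1) * Mm < ((N : ℝ) - 2) * mm + mp) :
    ∃ ε ∈ Set.Ioo (0 : ℝ) 1, ∀ z : ℕ, 1 ≤ z → z ≤ N - 1 →
      0 < (Mm - mm) * z + ((N : ℝ) - 1) * mm + mp ∧
      Mm * z / ((Mm - mm) * z + ((N : ℝ) - 1) * mm + mp)
        ≤ (1 - ε) * z / N := by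
  have hN2 : (2:ℝ) ≤ (N:ℝ) := by exact_mod_cast hN
  have hMmp : Mm < mp := by nlinarith
  set c : ℝ := min (((N:ℝ)-2)*mm + mp - ((N:ℝ)-1)*Mm) (mp - Mm) with hcdef
  have hc : 0 < c := lt_min (by linarith) (by linarith)
  have hc1 : c ≤ ((N:ℝ)-2)*mm + mp - ((N:ℝ)-1)*Mm := min_le_left _ _
  have hc2 : c ≤ mp - Mm := min_le_right _ _
  have hNM : 0 < (N:ℝ)*Mm := by nlinarith
  have hden : 0 < (N:ℝ)*Mm + c := by linarith
  refine ⟨c/((N:ℝ)*Mm + c), ⟨by positivity, ?_⟩, ?_⟩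
  · rw [div_lt_one hden]; linarith
  intro z hz1 hz2
  have hz1' : (1:ℝ) ≤ (z:ℝ) := by exact_mod_cast hz1
  have hz2' : (z:ℝ) ≤ (N:ℝ) - 1 := by
    have h : z + 1 ≤ N := by omega
    have h' : ((z:ℝ) + 1) ≤ (N:ℝ) := by exact_mod_cast h
    linarith
  have hD : (N:ℝ)*Mm + c ≤ (Mm - mm)*(z:ℝ) + ((N:ℝ)-1)*mm + mp := by
    rcases le_or_gt mm Mm with h | h
    · nlinarith [mul_nonneg (sub_nonneg.mpr h) (sub_nonneg.mpr hz1')]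
    · nlinarith [mul_nonneg (sub_nonneg.mpr h.le) (sub_nonneg.mpr hz2')]
  have hDpos : 0 < (Mm - mm)*(z:ℝ) + ((N:ℝ)-1)*mm + mp := by linarith
  refine ⟨hDpos, ?_⟩
  have hNpos : (0:ℝ) < (N:ℝ) := by linarith
  rw [div_le_div_iff₀ hDpos hNpos]
  have h1e : 0 < 1 - c/((N:ℝ)*Mm + c) := by
    rw [sub_pos, div_lt_one hden]; linarith
  have hε : (1 - c/((N:ℝ)*Mm + c)) * ((N:ℝ)*Mm + c) = (N:ℝ)*Mm := by
    field_simp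
    ring
  have key : (N:ℝ)*Mm ≤ (1 - c/((N:ℝ)*Mm + c)) *
      ((Mm - mm)*(z:ℝ) + ((N:ℝ)-1)*mm + mp) := by
    calc (N:ℝ)*Mm = (1 - c/((N:ℝ)*Mm + c)) * ((N:ℝ)*Mm + c) := hε.symm
    _ ≤ _ := by exact mul_le_mul_of_nonneg_left hD h1e.le
  have hzz : (0:ℝ) ≤ (z:ℝ) := by linarith
  nlinarith [mul_le_mul_of_nonneg_left key hzz]
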